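/- arXiv:2108.03610 — 2 statements merged into one kernel-verified Lean document; each statement's English description precedes it below -/
import Mathlib

section
/- Let X be a topological space, x ∈ X, and let H be a subgroup of π₁(X, x). Then the H-quasi-small loop set π_H^qs(X, x) is a subgroup of π₁(X, x). -/
open unitInterval

noncomputable section

attribute [local instance] Path.Homotopic.setoid

variable {X Y : Type*} [TopologicalSpace X] [TopologicalSpace Y]

/-- `HClose f g` : the path `f` is homotopically close to the path `g` rel `∂I`:
for every partition `0 = t₀ < t₁ < ⋯ < tₙ = 1` and every sequence of open sets
`U₁, …, Uₙ` with `g [tᵢ₋₁, tᵢ] ⊆ Uᵢ`, there is a path `γ`, homotopic to `f` rel `∂I`,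
with `γ [tᵢ₋₁, tᵢ] ⊆ Uᵢ` and `γ tᵢ = g tᵢ` for all `i`. -/
def HClose {a b : X} (f g : Path a b) : Prop :=
  ∀ (n : ℕ) (t : Fin (n + 1) → I), t 0 = 0 → t (Fin.last n) = 1 → StrictMono t →
    ∀ U : Fin n → Set X, (∀ i, IsOpen (U i)) →
      (∀ i : Fin n, g '' Set.Icc (t i.castSucc) (t i.succ) ⊆ U i) →
      ∃ γ : Path a b,
        (∀ i : Fin n, γ '' Set.Icc (t i.castSucc) (t i.succ) ⊆ U i) ∧
        (∀ i : Fin (n + 1), γ (t i) = g (t i)) ∧ γ.Homotopic f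

/-- The class of a loop at `x` as an element of the fundamental group. -/
def pathClass {x : X} (f : Path x x) : FundamentalGroup X x :=
  FundamentalGroup.fromPath ⟦f⟧

/-- The `H`-quasi-small loop set `π_H^qs(X, x)`. -/
def qsSet (x : X) (H : Set (FundamentalGroup X x)) : Set (FundamentalGroup X x) :=
  { p | ∃ f h : Path x x, pathClass f = p ∧ pathClass h ∈ H ∧ HClose f h }

/-- The quasi-small loop group `π₁^qs(X, x)`. -/
def qs (x : X) : Set (FundamentalGroup X x) :=
  qsSet x (⊥ : Subgroup (FundamentalGroup X x))

/-- The Spanier group of `(X, x)` with respect to the cover `𝒰`. -/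
def spanierCover (x : X) (𝒰 : Set (Set X)) : Subgroup (FundamentalGroup X x) :=
  Subgroup.closure { p | ∃ (y : X) (u : Path x y) (v : Path y y) (U : Set X),
    U ∈ 𝒰 ∧ Set.range v ⊆ U ∧ p = pathClass ((u.trans v).trans u.symm) }

/-- The (unbased) Spanier group `π₁^sp(X, x)`. -/
def spanierGroup (x : X) : Subgroup (FundamentalGroup X x) :=
  ⨅ (𝒰 : Set (Set X)) (_ : ∀ U ∈ 𝒰, IsOpen U) (_ : ⋃₀ 𝒰 = Set.univ), spanierCover x 𝒰

/-- The small generated subgroup `π₁^sg(X, x)`. -/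
def smallGenerated (x : X) : Subgroup (FundamentalGroup X x) :=
  Subgroup.closure { p | ∃ (y : X) (β : Path x y) (α : Path y y),
    HClose α (Path.refl y) ∧ p = pathClass ((β.trans α).trans β.symm) }

/-- `X` is homotopically path Hausdorff relative to `H ⊆ π₁(X, x)`. -/
def HPHausdorffRel (x : X) (H : Set (FundamentalGroup X x)) : Prop :=
  ∀ (y : X) (α β : Path x y), pathClass (α.trans β.symm) ∉ H →
    ∃ (n : ℕ) (t : Fin (n + 1) → I), t 0 = 0 ∧ t (Fin.last n) = 1 ∧ StrictMono t ∧
      ∃ U : Fin n → Set X, (∀ i, IsOpen (U i)) ∧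
        (∀ i : Fin n, α '' Set.Icc (t i.castSucc) (t i.succ) ⊆ U i) ∧
        ∀ γ : Path x y, (∀ i : Fin n, γ '' Set.Icc (t i.castSucc) (t i.succ) ⊆ U i) →
          (∀ i : Fin (n + 1), γ (t i) = α (t i)) → pathClass (γ.trans β.symm) ∉ H

section Aux

open Set

private lemma hclose_refl {a b : X} (g : Path a b) : HClose g g := by
  intro n t ht0 ht1 hsm U hUo hgU
  exact ⟨g, hgU, fun i => rfl, Path.Homotopic.refl g⟩

private lemma hclose_symm {a b : X} {f g : Path a b} (h : HClose f g) :
    HClose f.symm g.symm := by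
  intro n t ht0 ht1 hsm U hUo hgU
  set s : Fin (n + 1) → I := fun i => σ (t i.rev) with hs
  have hs0 : s 0 = 0 := by simp only [hs, Fin.rev_zero, ht1, symm_one]
  have hs1 : s (Fin.last n) = 1 := by simp only [hs, Fin.rev_last, ht0, symm_zero]
  have hssm : StrictMono s := fun i j hij => symm_lt_symm.2 (hsm (Fin.rev_lt_rev.2 hij))
  have hcs : ∀ m : Fin n, s m.castSucc = σ (t m.rev.succ) := fun m => by
    simp only [hs, Fin.rev_castSucc]
  have hsc : ∀ m : Fin n, s m.succ = σ (t m.rev.castSucc) := fun m => by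
    simp only [hs, Fin.rev_succ]
  have hcond : ∀ m : Fin n, g '' Set.Icc (s m.castSucc) (s m.succ) ⊆ U m.rev := by
    intro m
    rintro _ ⟨z, hz, rfl⟩
    rw [hcs, hsc] at hz
    have h1 : t m.rev.castSucc ≤ σ z := by
      rw [← symm_symm (t m.rev.castSucc)]; exact symm_le_symm.2 hz.2
    have h2 : σ z ≤ t m.rev.succ := by
      rw [← symm_symm (t m.rev.succ)]; exact symm_le_symm.2 hz.1
    have hgz : g z = g.symm (σ z) := by
      show g z = g (σ (σ z)); rw [unitInterval.symm_symm]
    rw [hgz]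
    exact hgU m.rev ⟨σ z, ⟨h1, h2⟩, rfl⟩
  obtain ⟨γ, C1, C2, C3⟩ := h n s hs0 hs1 hssm (fun m => U m.rev) (fun m => hUo m.rev) hcond
  refine ⟨γ.symm, ?_, ?_, Nonempty.map Path.Homotopy.symm₂ C3⟩
  · intro i
    rintro _ ⟨z, hz, rfl⟩
    have h1 : s i.rev.castSucc ≤ σ z := by
      rw [hcs, Fin.rev_rev]; exact symm_le_symm.2 hz.2
    have h2 : σ z ≤ s i.rev.succ := by
      rw [hsc, Fin.rev_rev]; exact symm_le_symm.2 hz.1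
    have hmem := C1 i.rev ⟨σ z, ⟨h1, h2⟩, rfl⟩
    rw [Fin.rev_rev] at hmem
    exact hmem
  · intro i
    show γ (σ (t i)) = g (σ (t i))
    have hsi : s i.rev = σ (t i) := by simp only [hs, Fin.rev_rev]
    rw [← hsi]
    exact C2 i.rev

private lemma hclose_mono {a b : X} {f g : Path a b} (h : HClose f g) :
    ∀ (n : ℕ) (t : Fin (n + 1) → I), t 0 = 0 → t (Fin.last n) = 1 → Monotone t →
      ∀ U : Fin n → Set X, (∀ i, IsOpen (U i)) →
        (∀ i : Fin n, g '' Set.Icc (t i.castSucc) (t i.succ) ⊆ U i) →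
        ∃ γ : Path a b,
          (∀ i : Fin n, γ '' Set.Icc (t i.castSucc) (t i.succ) ⊆ U i) ∧
          (∀ i : Fin (n + 1), γ (t i) = g (t i)) ∧ γ.Homotopic f := by
  intro n
  induction n with
  | zero =>
    intro t ht0 ht1 hmono U hUo hgU
    refine ⟨f, fun i => i.elim0, ?_, Path.Homotopic.refl f⟩
    intro i
    have hi : i = 0 := Fin.ext (by omega)
    rw [hi, ht0]
    simp
  | succ n ih =>
    intro t ht0 ht1 hmono U hUo hgU
    by_cases hsm : StrictMono t
    · exact h (n + 1) t ht0 ht1 hsm U hUo hgU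
    obtain ⟨j, hj⟩ : ∃ j : Fin (n + 1), t j.castSucc = t j.succ := by
      rw [Fin.strictMono_iff_lt_succ] at hsm
      push_neg at hsm
      obtain ⟨j, hj⟩ := hsm
      exact ⟨j, le_antisymm (hmono (Fin.castSucc_lt_succ (i := j)).le) hj⟩
    set t' : Fin (n + 1) → I := fun m => t ((j.succ).succAbove m) with ht'
    have key1 : ∀ m : Fin n, t' m.castSucc = t ((j.succAbove m).castSucc) := by
      intro m
      show t ((j.succ).succAbove m.castSucc) = t ((j.succAbove m).castSucc)
      rcases lt_trichotomy m.castSucc j with hlt | heq | hgt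
      · rw [Fin.succAbove_of_castSucc_lt _ _ (Fin.castSucc_lt_succ_iff.2 hlt.le),
          Fin.succAbove_of_castSucc_lt _ _ hlt]
      · rw [Fin.succAbove_of_castSucc_lt _ _ (Fin.castSucc_lt_succ_iff.2 heq.le),
          Fin.succAbove_of_le_castSucc _ _ heq.ge, ← Fin.succ_castSucc, heq]
        exact hj
      · rw [Fin.succAbove_of_le_castSucc _ _ (Fin.succ_le_castSucc_iff.2 hgt),
          Fin.succAbove_of_le_castSucc _ _ hgt.le, Fin.succ_castSucc]
    have key2 : ∀ m : Fin n, t' m.succ = t ((j.succAbove m).succ) := by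
      intro m
      show t ((j.succ).succAbove m.succ) = t ((j.succAbove m).succ)
      rw [Fin.succ_succAbove_succ]
    have ht'0 : t' 0 = 0 := by
      show t ((j.succ).succAbove 0) = 0
      rw [Fin.succAbove_of_castSucc_lt _ _ (by rw [Fin.castSucc_zero]; exact j.succ_pos)]
      rw [Fin.castSucc_zero]
      exact ht0
    have ht'1 : t' (Fin.last n) = 1 := by
      show t ((j.succ).succAbove (Fin.last n)) = 1
      by_cases hjl : j = Fin.last n
      · subst hjl
        rw [Fin.succAbove_of_castSucc_lt _ _ (Fin.castSucc_lt_succ (i := Fin.last n))]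
        rw [hj, Fin.succ_last]
        exact ht1
      · rw [Fin.succAbove_of_le_castSucc _ _
          (Fin.succ_le_castSucc_iff.2 ((Fin.le_last j).lt_of_ne hjl)), Fin.succ_last]
        exact ht1
    have ht'mono : Monotone t' := hmono.comp (Fin.strictMono_succAbove j.succ).monotone
    obtain ⟨γ, C1, C2, C3⟩ := ih t' ht'0 ht'1 ht'mono (fun m => U (j.succAbove m))
      (fun m => hUo _) (fun m => by rw [key1, key2]; exact hgU _)
    have hpt : ∀ i : Fin (n + 2), γ (t i) = g (t i) := by
      intro i
      by_cases hij : i = j.succ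
      · subst hij
        obtain ⟨m, hm⟩ := Fin.exists_succAbove_eq (Fin.castSucc_lt_succ (i := j)).ne
        rw [← hj]
        have h2 : t' m = t j.castSucc := by
          show t ((j.succ).succAbove m) = t j.castSucc; rw [hm]
        rw [← h2]
        exact C2 m
      · obtain ⟨m, hm⟩ := Fin.exists_succAbove_eq hij
        have h2 : t' m = t i := by
          show t ((j.succ).succAbove m) = t i; rw [hm]
        rw [← h2]
        exact C2 m
    refine ⟨γ, ?_, hpt, C3⟩
    intro i
    by_cases hij : i = j
    · subst hij
      rintro _ ⟨z, hz, rfl⟩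
      have hz2 : z ≤ t i.castSucc := by rw [hj]; exact hz.2
      have hz' : z = t i.castSucc := le_antisymm hz2 hz.1
      rw [hz', hpt i.castSucc]
      exact hgU i ⟨t i.castSucc, ⟨le_refl _, hj.le⟩, rfl⟩
    · obtain ⟨m, hm⟩ := Fin.exists_succAbove_eq hij
      rw [← hm, ← key1, ← key2]
      exact C1 m

private def lhalf (s : I) : I := Set.projIcc 0 1 zero_le_one (2 * (s : ℝ))

private def rhalf (s : I) : I := Set.projIcc 0 1 zero_le_one (2 * (s : ℝ) - 1)

private lemma coe_lhalf (s : I) : (lhalf s : ℝ) = max 0 (min 1 (2 * (s : ℝ))) := rfl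

private lemma coe_rhalf (s : I) : (rhalf s : ℝ) = max 0 (min 1 (2 * (s : ℝ) - 1)) := rfl

private lemma lhalf_mono : Monotone lhalf := fun s₁ s₂ h =>
  Set.monotone_projIcc zero_le_one (by have : (s₁ : ℝ) ≤ s₂ := h; linarith)

private lemma rhalf_mono : Monotone rhalf := fun s₁ s₂ h =>
  Set.monotone_projIcc zero_le_one (by have : (s₁ : ℝ) ≤ s₂ := h; linarith)

private lemma lhalf_zero : lhalf 0 = 0 := by
  apply Subtype.ext; rw [coe_lhalf]; norm_num

private lemma lhalf_one : lhalf 1 = 1 := by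
  apply Subtype.ext; rw [coe_lhalf]; norm_num

private lemma rhalf_zero : rhalf 0 = 0 := by
  apply Subtype.ext; rw [coe_rhalf]; norm_num

private lemma rhalf_one : rhalf 1 = 1 := by
  apply Subtype.ext; rw [coe_rhalf]; norm_num

private lemma lhalf_of_le {s : I} (hs : (s : ℝ) ≤ 1 / 2) :
    lhalf s = ⟨2 * (s : ℝ), ⟨by have := s.2.1; linarith, by linarith⟩⟩ :=
  Set.projIcc_of_mem _ _

private lemma rhalf_of_le {s : I} (hs : 1 / 2 ≤ (s : ℝ)) :
    rhalf s = ⟨2 * (s : ℝ) - 1, ⟨by linarith, by have := s.2.2; linarith⟩⟩ :=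
  Set.projIcc_of_mem _ _

private lemma trans_apply_left {a b c : X} (γ₁ : Path a b) (γ₂ : Path b c) {s : I}
    (hs : (s : ℝ) ≤ 1 / 2) : (γ₁.trans γ₂) s = γ₁ (lhalf s) := by
  rw [Path.trans_apply, dif_pos hs, lhalf_of_le hs]

private lemma trans_apply_right {a b c : X} (γ₁ : Path a b) (γ₂ : Path b c) {s : I}
    (hs : 1 / 2 ≤ (s : ℝ)) : (γ₁.trans γ₂) s = γ₂ (rhalf s) := by
  rcases lt_or_eq_of_le hs with h | h
  · rw [Path.trans_apply, dif_neg (not_le.2 h), rhalf_of_le hs]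
  · rw [trans_apply_left γ₁ γ₂ h.ge]
    have e1 : lhalf s = 1 := by
      apply Subtype.ext; rw [coe_lhalf, ← h]; norm_num
    have e2 : rhalf s = 0 := by
      apply Subtype.ext; rw [coe_rhalf, ← h]; norm_num
    rw [e1, e2]
    simp

private lemma hclose_trans {a b c : X} {f₁ g₁ : Path a b} {f₂ g₂ : Path b c}
    (h₁ : HClose f₁ g₁) (h₂ : HClose f₂ g₂) : HClose (f₁.trans f₂) (g₁.trans g₂) := by
  intro n t ht0 ht1 hsm U hUo hgU
  have hcondL : ∀ i : Fin n, g₁ '' Set.Icc (lhalf (t i.castSucc)) (lhalf (t i.succ)) ⊆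
      (if (t i.castSucc : ℝ) < 1 / 2 then U i else Set.univ) := by
    intro i
    by_cases hlt : (t i.castSucc : ℝ) < 1 / 2
    · rw [if_pos hlt]
      rintro _ ⟨z, hz, rfl⟩
      have hzu : (z : ℝ) ≤ 2 * (t i.succ : ℝ) := by
        have hh : (z : ℝ) ≤ max 0 (min 1 (2 * (t i.succ : ℝ))) := hz.2
        have h2 : (0 : ℝ) ≤ 2 * (t i.succ : ℝ) := by have := (t i.succ).2.1; linarith
        exact hh.trans (max_le h2 (min_le_right _ _))
      have hzl : 2 * (t i.castSucc : ℝ) ≤ z := by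
        have hh : max 0 (min 1 (2 * (t i.castSucc : ℝ))) ≤ (z : ℝ) := hz.1
        have h2 : (0 : ℝ) ≤ 2 * (t i.castSucc : ℝ) := by
          have := (t i.castSucc).2.1; linarith
        rwa [min_eq_right (by linarith), max_eq_right h2] at hh
      set w : I := ⟨(z : ℝ) / 2, ⟨by have := z.2.1; linarith, by have := z.2.2; linarith⟩⟩
        with hw
      have hw2 : (w : ℝ) ≤ 1 / 2 := by
        show (z : ℝ) / 2 ≤ 1 / 2; have := z.2.2; linarith
      have hgw : (g₁.trans g₂) w = g₁ z := by
        rw [trans_apply_left _ _ hw2]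
        congr 1
        apply Subtype.ext
        rw [coe_lhalf]
        show max 0 (min 1 (2 * ((z : ℝ) / 2))) = (z : ℝ)
        have h3 : 2 * ((z : ℝ) / 2) = z := by ring
        rw [h3, min_eq_right z.2.2, max_eq_right z.2.1]
      rw [← hgw]
      refine hgU i ⟨w, ⟨?_, ?_⟩, rfl⟩
      · show (t i.castSucc : ℝ) ≤ (z : ℝ) / 2; linarith
      · show (z : ℝ) / 2 ≤ (t i.succ : ℝ); linarith
    · rw [if_neg hlt]
      exact fun _ _ => Set.mem_univ _
  obtain ⟨γ₁, A1, A2, A3⟩ := hclose_mono h₁ n (fun i => lhalf (t i))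
    (by show lhalf (t 0) = 0; rw [ht0]; exact lhalf_zero)
    (by show lhalf (t (Fin.last n)) = 1; rw [ht1]; exact lhalf_one)
    (fun i j hij => lhalf_mono (hsm.monotone hij))
    (fun i => if (t i.castSucc : ℝ) < 1 / 2 then U i else Set.univ)
    (fun i => by
      show IsOpen (if (t i.castSucc : ℝ) < 1 / 2 then U i else Set.univ)
      split_ifs; exacts [hUo i, isOpen_univ]) hcondL
  have hcondR : ∀ i : Fin n, g₂ '' Set.Icc (rhalf (t i.castSucc)) (rhalf (t i.succ)) ⊆
      (if (1 / 2 : ℝ) < (t i.succ : ℝ) then U i else Set.univ) := by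
    intro i
    by_cases hlt : (1 / 2 : ℝ) < (t i.succ : ℝ)
    · rw [if_pos hlt]
      rintro _ ⟨z, hz, rfl⟩
      have hzu : (z : ℝ) ≤ 2 * (t i.succ : ℝ) - 1 := by
        have hh : (z : ℝ) ≤ max 0 (min 1 (2 * (t i.succ : ℝ) - 1)) := hz.2
        have h2 : (0 : ℝ) ≤ 2 * (t i.succ : ℝ) - 1 := by linarith
        have h3 : min 1 (2 * (t i.succ : ℝ) - 1) ≤ 2 * (t i.succ : ℝ) - 1 :=
          min_le_right _ _
        exact hh.trans (max_le h2 h3)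
      have hzl : 2 * (t i.castSucc : ℝ) - 1 ≤ z := by
        have hh : max 0 (min 1 (2 * (t i.castSucc : ℝ) - 1)) ≤ (z : ℝ) := hz.1
        have h2 : 2 * (t i.castSucc : ℝ) - 1 ≤ 1 := by
          have := (t i.castSucc).2.2; linarith
        exact le_trans (le_trans (le_min h2 le_rfl) (le_max_right _ _)) hh
      set w : I := ⟨((z : ℝ) + 1) / 2,
        ⟨by have := z.2.1; linarith, by have := z.2.2; linarith⟩⟩ with hw
      have hw2 : (1 / 2 : ℝ) ≤ (w : ℝ) := by
        show (1 / 2 : ℝ) ≤ ((z : ℝ) + 1) / 2; have := z.2.1; linarith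
      have hgw : (g₁.trans g₂) w = g₂ z := by
        rw [trans_apply_right _ _ hw2]
        congr 1
        apply Subtype.ext
        rw [coe_rhalf]
        show max 0 (min 1 (2 * (((z : ℝ) + 1) / 2) - 1)) = (z : ℝ)
        have h3 : 2 * (((z : ℝ) + 1) / 2) - 1 = z := by ring
        rw [h3, min_eq_right z.2.2, max_eq_right z.2.1]
      rw [← hgw]
      refine hgU i ⟨w, ⟨?_, ?_⟩, rfl⟩
      · show (t i.castSucc : ℝ) ≤ ((z : ℝ) + 1) / 2; linarith
      · show ((z : ℝ) + 1) / 2 ≤ (t i.succ : ℝ); linarith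
    · rw [if_neg hlt]
      exact fun _ _ => Set.mem_univ _
  obtain ⟨γ₂, B1, B2, B3⟩ := hclose_mono h₂ n (fun i => rhalf (t i))
    (by show rhalf (t 0) = 0; rw [ht0]; exact rhalf_zero)
    (by show rhalf (t (Fin.last n)) = 1; rw [ht1]; exact rhalf_one)
    (fun i j hij => rhalf_mono (hsm.monotone hij))
    (fun i => if (1 / 2 : ℝ) < (t i.succ : ℝ) then U i else Set.univ)
    (fun i => by
      show IsOpen (if (1 / 2 : ℝ) < (t i.succ : ℝ) then U i else Set.univ)
      split_ifs; exacts [hUo i, isOpen_univ]) hcondR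
  have hpt : ∀ i : Fin (n + 1), (γ₁.trans γ₂) (t i) = (g₁.trans g₂) (t i) := by
    intro i
    rcases le_or_gt ((t i : ℝ)) (1 / 2) with hle | hlt
    · rw [trans_apply_left _ _ hle, trans_apply_left _ _ hle]
      exact A2 i
    · rw [trans_apply_right _ _ hlt.le, trans_apply_right _ _ hlt.le]
      exact B2 i
  refine ⟨γ₁.trans γ₂, ?_, hpt, Path.Homotopic.hcomp A3 B3⟩
  intro i
  rintro _ ⟨z, hz, rfl⟩
  rcases le_or_gt ((z : ℝ)) (1 / 2) with hle | hlt
  · rcases lt_or_ge ((t i.castSucc : ℝ)) (1 / 2) with hcs | hcs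
    · rw [trans_apply_left _ _ hle]
      have hmem : γ₁ (lhalf z) ∈ (if (t i.castSucc : ℝ) < 1 / 2 then U i else Set.univ) :=
        A1 i ⟨lhalf z, ⟨lhalf_mono hz.1, lhalf_mono hz.2⟩, rfl⟩
      rwa [if_pos hcs] at hmem
    · have hz2 : z = t i.castSucc := by
        apply Subtype.ext
        have hle2 : (t i.castSucc : ℝ) ≤ (z : ℝ) := hz.1
        linarith
      rw [hz2, hpt i.castSucc]
      exact hgU i ⟨t i.castSucc, ⟨le_refl _, (hsm (Fin.castSucc_lt_succ (i := i))).le⟩, rfl⟩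
  · rcases lt_or_ge ((1 : ℝ) / 2) ((t i.succ : ℝ)) with hsu | hsu
    · rw [trans_apply_right _ _ hlt.le]
      have hmem : γ₂ (rhalf z) ∈ (if (1 / 2 : ℝ) < (t i.succ : ℝ) then U i else Set.univ) :=
        B1 i ⟨rhalf z, ⟨rhalf_mono hz.1, rhalf_mono hz.2⟩, rfl⟩
      rwa [if_pos hsu] at hmem
    · exfalso
      have hle2 : (z : ℝ) ≤ (t i.succ : ℝ) := hz.2
      linarith

private lemma pathClass_refl_eq_one {x : X} : pathClass (Path.refl x) = 1 :=
  rfl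

private lemma pathClass_trans' {x : X} (f g : Path x x) :
    pathClass (f.trans g) = pathClass g * pathClass f :=
  rfl

private lemma pathClass_symm' {x : X} (f : Path x x) :
    pathClass f.symm = (pathClass f)⁻¹ :=
  rfl

end Aux

/-- if `H` is a subgroup of `π₁(X, x)`, then `π_H^qs(X, x)` is a
subgroup of `π₁(X, x)`. -/
theorem stmt4 (x : X) (H : Subgroup (FundamentalGroup X x)) :
    ∃ S : Subgroup (FundamentalGroup X x), (S : Set (FundamentalGroup X x)) = qsSet x ↑H := by
  refine ⟨{ carrier := qsSet x ↑H, one_mem' := ?neo, mul_mem' := ?nemul, inv_mem' := ?neinv }, rfl⟩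
  case neo =>
    exact ⟨Path.refl x, Path.refl x, pathClass_refl_eq_one,
      by rw [pathClass_refl_eq_one]; exact H.one_mem, hclose_refl _⟩
  case nemul =>
    rintro p q ⟨f₁, h₁, hp, hH₁, hc₁⟩ ⟨f₂, h₂, hq, hH₂, hc₂⟩
    refine ⟨f₂.trans f₁, h₂.trans h₁, ?_, ?_, hclose_trans hc₂ hc₁⟩
    · rw [pathClass_trans', hp, hq]
    · rw [pathClass_trans']; exact H.mul_mem hH₁ hH₂
  case neinv =>
    rintro p ⟨f, h, hp, hH, hc⟩
    refine ⟨f.symm, h.symm, ?_, ?_, hclose_symm hc⟩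
    · rw [pathClass_symm', hp]
    · rw [pathClass_symm']; exact H.inv_mem hH
end
end

section
/- Let X be a topological space, let H be a subgroup of π₁(X, x), and let λ be a path in X from x to y. Then the map β_λ : π_H^qs(X, x) → π_{[λ]⁻¹H[λ]}^qs(X, y) defined by β_λ([f]) = [λ⁻¹ * f * λ] is a group isomorphism, where [λ]⁻¹H[λ] = { [λ⁻¹ * h * λ] | [h] ∈ H }. In particular, π₁^qs(X, x) ≅ π₁^qs(X, y) whenever x and y lie in the same path component of X. -/
open unitInterval

noncomputable section

attribute [local instance] Path.Homotopic.setoid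

variable {X Y : Type*} [TopologicalSpace X] [TopologicalSpace Y]

lemma trans_left {a b c : X} (f : Path a b) (g : Path b c) {u v : I}
    (hu : (u : ℝ) ≤ 1 / 2) (hv : (v : ℝ) = 2 * u) : (f.trans g) u = f v := by
  rw [Path.trans_apply, dif_pos hu]
  congr 1
  exact Subtype.ext hv.symm

lemma trans_right {a b c : X} (f : Path a b) (g : Path b c) {u v : I}
    (hu : 1 / 2 ≤ (u : ℝ)) (hv : (v : ℝ) = 2 * u - 1) : (f.trans g) u = g v := by
  rw [Path.trans_apply]
  split_ifs with hle
  · have h12 : (u : ℝ) = 1 / 2 := le_antisymm hle hu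
    have hv0 : v = 0 := Subtype.ext (by rw [hv, h12]; norm_num)
    rw [hv0, g.source]
    convert f.target using 2
    exact Subtype.ext (by show 2 * (u:ℝ) = 1; rw [h12]; norm_num)
  · congr 1
    exact Subtype.ext hv.symm

lemma HClose.congr_left {a b : X} {f f' h : Path a b} (hc : HClose f h)
    (hf : f.Homotopic f') : HClose f' h := by
  intro n t h0 h1 hm U hop hcov
  obtain ⟨γ, hg1, hg2, hg3⟩ := hc n t h0 h1 hm U hop hcov
  exact ⟨γ, hg1, hg2, hg3.trans hf⟩

lemma image_symm_Icc (p q : I) : σ '' Set.Icc p q = Set.Icc (σ q) (σ p) := by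
  ext u
  simp only [Set.mem_image, Set.mem_Icc]
  constructor
  · rintro ⟨v, ⟨hv1, hv2⟩, rfl⟩
    rw [← Subtype.coe_le_coe] at hv1 hv2 ⊢
    rw [← Subtype.coe_le_coe]
    simp only [coe_symm_eq]
    constructor <;> linarith
  · rintro ⟨h1, h2⟩
    refine ⟨σ u, ?_, symm_symm u⟩
    rw [← Subtype.coe_le_coe] at h1 h2 ⊢
    rw [← Subtype.coe_le_coe]
    simp only [coe_symm_eq] at *
    constructor <;> linarith

lemma HClose.symmP {a b : X} {f h : Path a b} (hc : HClose f h) :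
    HClose f.symm h.symm := by
  intro n t h0 h1 hm U hop hcov
  set t' : Fin (n + 1) → I := fun i => σ (t i.rev) with ht'
  have ht'0 : t' 0 = 0 := by simp [ht', Fin.rev_zero, h1]
  have ht'1 : t' (Fin.last n) = 1 := by simp [ht', Fin.rev_last, h0]
  have ht'mono : StrictMono t' := by
    intro i j hij
    rw [ht']
    rw [← Subtype.coe_lt_coe]
    simp only [coe_symm_eq]
    have hlt : t j.rev < t i.rev := hm (Fin.rev_lt_rev.mpr hij)
    rw [← Subtype.coe_lt_coe] at hlt
    linarith
  have key : ∀ i : Fin n, Set.Icc (t' i.castSucc) (t' i.succ)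
      = σ '' Set.Icc (t i.rev.castSucc) (t i.rev.succ) := by
    intro i
    rw [image_symm_Icc]
    simp only [t', Fin.rev_castSucc, Fin.rev_succ]
  have hcov' : ∀ i : Fin n, ⇑h '' Set.Icc (t' i.castSucc) (t' i.succ) ⊆ U i.rev := by
    intro i
    rw [key i, ← Set.image_comp]
    have : ⇑h ∘ σ = ⇑h.symm := rfl
    rw [this]
    exact hcov i.rev
  obtain ⟨γ, hg1, hg2, hg3⟩ := hc n t' ht'0 ht'1 ht'mono (fun i => U i.rev) (fun i => hop i.rev) hcov'
  refine ⟨γ.symm, ?_, ?_, ?_⟩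
  · intro i
    have : Set.Icc (t i.castSucc) (t i.succ) = σ '' Set.Icc (t' i.rev.castSucc) (t' i.rev.succ) := by
      rw [image_symm_Icc]
      simp only [t', Fin.rev_castSucc, Fin.rev_succ, Fin.rev_rev, symm_symm]
    rw [this, ← Set.image_comp]
    have h2 : ⇑γ.symm ∘ σ = ⇑γ := by
      funext u; show γ.symm (σ u) = γ u; rw [Path.symm_apply]; show γ (σ (σ u)) = γ u
      rw [symm_symm]
    rw [h2]
    have := hg1 i.rev
    rwa [Fin.rev_rev] at this
  · intro i
    have hσ : σ (t i) = t' i.rev := by simp only [t', Fin.rev_rev]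
    show γ (σ (t i)) = h (σ (t i))
    rw [hσ]
    exact hg2 i.rev
  · obtain ⟨F⟩ := hg3
    exact ⟨F.symm₂⟩
lemma HClose.transRight {a b c : X} {f h : Path a b} (hc : HClose f h) (ρ : Path b c) :
    HClose (f.trans ρ) (h.trans ρ) := by
  intro n t h0 h1 hm U hop hcov
  cases n with
  | zero =>
    exfalso
    have h01 : (0 : I) = 1 := by
      rw [← h0, ← h1]; congr 1
    have : (0 : ℝ) = 1 := congrArg Subtype.val h01
    norm_num at this
  | succ m =>
  classical
  -- real-valued version of t
  set tv : ℕ → ℝ := fun k => (t ⟨min k (m + 1), by omega⟩ : ℝ) with htv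
  have tv_eq' : ∀ k, k ≤ m + 1 → ∀ (hk : k < m + 2), tv k = (t ⟨k, hk⟩ : ℝ) := by
    intro k hk hk'
    have e : (⟨min k (m + 1), by omega⟩ : Fin (m + 2)) = ⟨k, hk'⟩ :=
      Fin.ext (by simp [min_eq_left hk])
    rw [htv]; simp only [e]
  have tv_eq : ∀ k : Fin (m + 2), tv (k : ℕ) = (t k : ℝ) := by
    intro k
    rw [tv_eq' _ (by omega) k.isLt]
  have tv_mem : ∀ k, 0 ≤ tv k ∧ tv k ≤ 1 := fun k => (t _).2
  have tv_smono : ∀ k l, k < l → l ≤ m + 1 → tv k < tv l := by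
    intro k l hkl hl
    rw [tv_eq' _ (by omega) (by omega), tv_eq' _ hl (by omega)]
    exact Subtype.coe_lt_coe.mpr (hm (Fin.mk_lt_mk.mpr hkl))
  have tv_mono : ∀ k l, k ≤ l → l ≤ m + 1 → tv k ≤ tv l := by
    intro k l hkl hl
    rcases eq_or_lt_of_le hkl with rfl | hlt
    · exact le_rfl
    · exact le_of_lt (tv_smono _ _ hlt hl)
  have tv0 : tv 0 = 0 := by
    rw [tv_eq' 0 (by omega) (by omega)]
    rw [show (⟨0, by omega⟩ : Fin (m + 2)) = 0 from rfl, h0]; rfl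
  have tv1 : tv (m + 1) = 1 := by
    rw [tv_eq' (m + 1) le_rfl (by omega)]
    rw [show (⟨m + 1, by omega⟩ : Fin (m + 2)) = Fin.last (m + 1) from rfl, h1]; rfl
  -- the greatest index with tv < 1/2
  set P : ℕ → Prop := fun i => i ≤ m + 1 ∧ tv i < 1 / 2 with hP
  set q : ℕ := Nat.findGreatest P (m + 1) with hq
  have hq_le : q ≤ m + 1 := by rw [hq]; exact Nat.findGreatest_le _
  have hq_spec : P q := by
    rw [hq]
    exact Nat.findGreatest_spec (Nat.zero_le _) ⟨by omega, by rw [tv0]; norm_num⟩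
  have hq_lt : q < m + 1 := by
    rcases Nat.lt_or_ge q (m + 1) with hlt | hge
    · exact hlt
    · exfalso
      have : q = m + 1 := le_antisymm hq_le hge
      rw [this, hP] at hq_spec
      rw [tv1] at hq_spec
      norm_num at hq_spec
  have htq : ∀ j, j ≤ q → tv j < 1 / 2 :=
    fun j hj => lt_of_le_of_lt (tv_mono j q hj (by omega)) hq_spec.2
  have hq1 : 1 / 2 ≤ tv (q + 1) := by
    by_contra hcon
    push_neg at hcon
    have hgr := Nat.findGreatest_is_greatest (P := P) (n := m + 1) (k := q + 1) (by omega) (by omega)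
    exact hgr ⟨by omega, hcon⟩
  -- the partition for h
  set sv : ℕ → ℝ := fun k => if k ≤ q then 2 * tv k else 1 with hsv
  have sv_mem : ∀ k, 0 ≤ sv k ∧ sv k ≤ 1 := by
    intro k
    simp only [hsv]
    split_ifs with hk
    · have := htq k hk; have := (tv_mem k).1
      constructor <;> linarith
    · norm_num
  set s : Fin (q + 2) → I := fun j => ⟨sv (j : ℕ), Set.mem_Icc.mpr (sv_mem _)⟩ with hs
  have hs0 : s 0 = 0 := by
    apply Subtype.ext
    show sv ((0 : Fin (q + 2)) : ℕ) = 0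
    rw [Fin.val_zero]
    simp only [hsv]
    rw [if_pos (Nat.zero_le q), tv0]; ring
  have hslast : s (Fin.last (q + 1)) = 1 := by
    apply Subtype.ext
    show sv ((Fin.last (q + 1)) : ℕ) = 1
    rw [Fin.val_last]
    simp only [hsv]
    rw [if_neg (by omega)]
  have hsmono : StrictMono s := by
    intro i j hij
    have hij' : (i : ℕ) < (j : ℕ) := hij
    have hjle : (j : ℕ) ≤ q + 1 := by omega
    rw [← Subtype.coe_lt_coe]
    show sv (i : ℕ) < sv (j : ℕ)
    simp only [hsv]
    by_cases hjq : (j : ℕ) ≤ q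
    · rw [if_pos (by omega : (i:ℕ) ≤ q), if_pos hjq]
      have := tv_smono (i : ℕ) (j : ℕ) hij' (by omega)
      linarith
    · rw [if_neg hjq, if_pos (by omega : (i:ℕ) ≤ q)]
      have := htq (i : ℕ) (by omega)
      linarith
  set V : Fin (q + 1) → Set X := fun j => U ⟨(j : ℕ), by omega⟩ with hV
  have hVopen : ∀ j, IsOpen (V j) := fun j => hop _
  have hVcov : ∀ j : Fin (q + 1), ⇑h '' Set.Icc (s j.castSucc) (s j.succ) ⊆ V j := by
    rintro j w ⟨u, hu, rfl⟩
    have hjq : (j : ℕ) ≤ q := by omega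
    have hu1 : sv (j : ℕ) ≤ (u : ℝ) := by
      have := Subtype.coe_le_coe.mpr hu.1
      simpa [hs, Fin.coe_castSucc] using this
    have hu2 : (u : ℝ) ≤ sv ((j : ℕ) + 1) := by
      have := Subtype.coe_le_coe.mpr hu.2
      simpa [hs, Fin.val_succ] using this
    have hu1' : 2 * tv (j : ℕ) ≤ (u : ℝ) := by simp only [hsv] at hu1; rwa [if_pos hjq] at hu1
    set v : I := ⟨(u : ℝ) / 2, Set.mem_Icc.mpr ⟨by have := u.2.1; linarith, by have := u.2.2; linarith⟩⟩ with hv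
    have hveq : (h.trans ρ) v = h u := by
      apply trans_left h ρ
      · show (u : ℝ) / 2 ≤ 1 / 2; have := u.2.2; linarith
      · show (u : ℝ) = 2 * ((u : ℝ) / 2); ring
    rw [← hveq]
    set i : Fin (m + 1) := ⟨(j : ℕ), by omega⟩ with hi
    have hUV : U i = V j := rfl
    rw [← hUV]
    apply hcov i
    refine ⟨v, Set.mem_Icc.mpr ⟨?_, ?_⟩, rfl⟩
    · rw [← Subtype.coe_le_coe]
      show (t i.castSucc : ℝ) ≤ (u : ℝ) / 2
      rw [← tv_eq]
      have : ((i.castSucc : Fin (m + 2)) : ℕ) = (j : ℕ) := rfl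
      rw [this]
      linarith
    · rw [← Subtype.coe_le_coe]
      show (u : ℝ) / 2 ≤ (t i.succ : ℝ)
      rw [← tv_eq]
      have hisucc : ((i.succ : Fin (m + 2)) : ℕ) = (j : ℕ) + 1 := rfl
      rw [hisucc]
      by_cases hjq' : (j : ℕ) + 1 ≤ q
      · simp only [hsv] at hu2; rw [if_pos hjq'] at hu2; linarith
      · simp only [hsv] at hu2; rw [if_neg hjq'] at hu2
        have hjq2 : (j : ℕ) = q := by omega
        rw [hjq2]
        linarith
  obtain ⟨γ, hg1, hg2, hg3⟩ := hc (q + 1) s hs0 hslast hsmono V hVopen hVcov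
  refine ⟨γ.trans ρ, ?_, ?_, Path.Homotopic.hcomp hg3 (Path.Homotopic.refl ρ)⟩
  · -- images
    rintro i w ⟨u, hu, rfl⟩
    have hu1 : (t i.castSucc : ℝ) ≤ (u : ℝ) := Subtype.coe_le_coe.mpr hu.1
    have hu2 : (u : ℝ) ≤ (t i.succ : ℝ) := Subtype.coe_le_coe.mpr hu.2
    have hics : ((i.castSucc : Fin (m + 2)) : ℕ) = (i : ℕ) := rfl
    have hisc : ((i.succ : Fin (m + 2)) : ℕ) = (i : ℕ) + 1 := rfl
    by_cases hiq : (i : ℕ) ≤ q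
    · by_cases hu12 : (u : ℝ) ≤ 1 / 2
      · set u2 : I := ⟨2 * (u : ℝ), Set.mem_Icc.mpr ⟨by have := u.2.1; linarith, by linarith⟩⟩ with hu2d
        rw [trans_left γ ρ hu12 (rfl : (u2 : ℝ) = 2 * (u : ℝ))]
        set j : Fin (q + 1) := ⟨(i : ℕ), by omega⟩ with hj
        have hUV : V j = U i := by
          rw [hV]
        rw [← hUV]
        apply hg1 j
        refine ⟨u2, Set.mem_Icc.mpr ⟨?_, ?_⟩, rfl⟩
        · rw [← Subtype.coe_le_coe]
          show sv ((j.castSucc : Fin (q + 2)) : ℕ) ≤ 2 * (u : ℝ)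
          have : ((j.castSucc : Fin (q + 2)) : ℕ) = (i : ℕ) := rfl
          rw [this]; simp only [hsv]; rw [if_pos hiq]
          rw [← tv_eq i.castSucc, hics] at hu1
          linarith
        · rw [← Subtype.coe_le_coe]
          show 2 * (u : ℝ) ≤ sv ((j.succ : Fin (q + 2)) : ℕ)
          have : ((j.succ : Fin (q + 2)) : ℕ) = (i : ℕ) + 1 := rfl
          rw [this]; simp only [hsv]
          split_ifs with hiq1
          · rw [← tv_eq i.succ, hisc] at hu2
            linarith
          · linarith
      · push_neg at hu12
        have hΓ : (γ.trans ρ) u = (h.trans ρ) u := by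
          rw [trans_right γ ρ (le_of_lt hu12) (rfl : ((⟨2 * (u:ℝ) - 1, Set.mem_Icc.mpr ⟨by linarith, by have := u.2.2; linarith⟩⟩ : I) : ℝ) = 2 * (u : ℝ) - 1),
            trans_right h ρ (le_of_lt hu12) (rfl : ((⟨2 * (u:ℝ) - 1, Set.mem_Icc.mpr ⟨by linarith, by have := u.2.2; linarith⟩⟩ : I) : ℝ) = 2 * (u : ℝ) - 1)]
        rw [hΓ]
        exact hcov i ⟨u, hu, rfl⟩
    · -- i > q : the whole interval is in the ρ part
      have h12u : 1 / 2 ≤ (u : ℝ) := by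
        have : 1 / 2 ≤ tv ((i.castSucc : Fin (m + 2)) : ℕ) := by
          rw [hics]
          exact le_trans hq1 (tv_mono (q + 1) (i : ℕ) (by omega) (by omega))
        rw [tv_eq] at this
        linarith
      have hΓ : (γ.trans ρ) u = (h.trans ρ) u := by
        rw [trans_right γ ρ h12u (rfl : ((⟨2 * (u:ℝ) - 1, Set.mem_Icc.mpr ⟨by linarith, by have := u.2.2; linarith⟩⟩ : I) : ℝ) = 2 * (u : ℝ) - 1),
          trans_right h ρ h12u (rfl : ((⟨2 * (u:ℝ) - 1, Set.mem_Icc.mpr ⟨by linarith, by have := u.2.2; linarith⟩⟩ : I) : ℝ) = 2 * (u : ℝ) - 1)]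
      rw [hΓ]
      exact hcov i ⟨u, hu, rfl⟩
  · -- values
    intro k
    by_cases hkq : (k : ℕ) ≤ q
    · have hk12 : (t k : ℝ) < 1 / 2 := by
        rw [← tv_eq k]; exact htq _ hkq
      set u2 : I := ⟨2 * (t k : ℝ), Set.mem_Icc.mpr ⟨by have := (t k).2.1; linarith, by linarith⟩⟩ with hu2d
      rw [trans_left γ ρ (le_of_lt hk12) (rfl : (u2 : ℝ) = 2 * ((t k : I) : ℝ)),
        trans_left h ρ (le_of_lt hk12) (rfl : (u2 : ℝ) = 2 * ((t k : I) : ℝ))]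
      have hu2s : u2 = s ⟨(k : ℕ), by omega⟩ := by
        apply Subtype.ext
        show 2 * (t k : ℝ) = sv ((⟨(k : ℕ), by omega⟩ : Fin (q + 2)) : ℕ)
        show 2 * (t k : ℝ) = sv (k : ℕ)
        simp only [hsv]; rw [if_pos hkq, tv_eq]
      rw [hu2s]
      exact hg2 _
    · have hk12 : 1 / 2 ≤ (t k : ℝ) := by
        rw [← tv_eq k]
        exact le_trans hq1 (tv_mono (q + 1) (k : ℕ) (by omega) (by omega))
      have hmem : 2 * ((t k : I) : ℝ) - 1 ∈ Set.Icc (0:ℝ) 1 :=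
        Set.mem_Icc.mpr ⟨by linarith, by have := (t k).2.2; linarith⟩
      rw [trans_right γ ρ hk12 (rfl : ((⟨2 * ((t k : I) : ℝ) - 1, hmem⟩ : I) : ℝ) = 2 * ((t k : I) : ℝ) - 1),
        trans_right h ρ hk12 (rfl : ((⟨2 * ((t k : I) : ℝ) - 1, hmem⟩ : I) : ℝ) = 2 * ((t k : I) : ℝ) - 1)]

lemma HClose.transLeft {a b c : X} {f h : Path a b} (hc : HClose f h) (μ : Path c a) :
    HClose (μ.trans f) (μ.trans h) := by
  have h1 := (hc.symmP.transRight μ.symm).symmP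
  rwa [Path.trans_symm, Path.trans_symm, Path.symm_symm, Path.symm_symm,
    Path.symm_symm] at h1

lemma HClose.conj {x y : X} {f h : Path x x} (hc : HClose f h) (lam : Path x y) :
    HClose ((lam.symm.trans f).trans lam) ((lam.symm.trans h).trans lam) :=
  (hc.transLeft lam.symm).transRight lam

open CategoryTheory in
lemma pathClass_hom {x : X} (f : Path x x) :
    (pathClass f : FundamentalGroupoid.mk x ⟶ FundamentalGroupoid.mk x)
      = (⟦f⟧ : FundamentalGroupoid.mk x ⟶ FundamentalGroupoid.mk x) := rfl

open CategoryTheory in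
lemma pathClass_eq_iff {x : X} (f g : Path x x) :
    pathClass f = pathClass g ↔ f.Homotopic g := by
  constructor
  · intro hfg
    exact Quotient.exact hfg
  · intro hfg
    exact Quotient.sound hfg

open CategoryTheory in
lemma pathClass_refl (x : X) : pathClass (Path.refl x) = 1 := by
  rfl

section MainAux

open CategoryTheory

variable {x y : X} (lam : Path x y)

private def Liso (lam : Path x y) :
    FundamentalGroupoid.mk x ≅ FundamentalGroupoid.mk y :=
  (Groupoid.isoEquivHom _ _).symm ⟦lam⟧

private def Phi (lam : Path x y) : FundamentalGroup X x ≃* FundamentalGroup X y :=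
  (Liso lam).conj

lemma Phi_pathClass (f : Path x x) :
    Phi lam (pathClass f) = pathClass ((lam.symm.trans f).trans lam) := by
  have h1 : (Phi lam (pathClass f)) = (Liso lam).inv ≫ (pathClass f) ≫ (Liso lam).hom := rfl
  rw [h1, ← Category.assoc]
  rfl

lemma Phi_symm_pathClass (f : Path y y) :
    (Phi lam).symm (pathClass f) = pathClass ((lam.trans f).trans lam.symm) := by
  have h1 : ((Phi lam).symm (pathClass f))
      = (Liso lam).hom ≫ (pathClass f) ≫ (Liso lam).inv := rfl
  rw [h1, ← Category.assoc]
  rfl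

lemma qsSet_mem_transport (H : Subgroup (FundamentalGroup X x)) (p : FundamentalGroup X x) :
    p ∈ qsSet x (H : Set (FundamentalGroup X x)) ↔
      Phi lam p ∈ qsSet y { q | ∃ h : Path x x, pathClass h ∈ H ∧
        q = pathClass ((lam.symm.trans h).trans lam) } := by
  constructor
  · rintro ⟨f, h0, rfl, hH, hcl⟩
    exact ⟨(lam.symm.trans f).trans lam, (lam.symm.trans h0).trans lam,
      (Phi_pathClass lam f).symm, ⟨h0, hH, rfl⟩, hcl.conj lam⟩
  · rintro ⟨f', h', hf', ⟨h0, hh0, hh'⟩, hcl⟩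
    have key : p = (Phi lam).symm (pathClass f') := by
      rw [hf', MulEquiv.symm_apply_apply]
    have hcl2 := hcl.conj lam.symm
    rw [Path.symm_symm] at hcl2
    refine ⟨(lam.trans f').trans lam.symm, (lam.trans h').trans lam.symm,
      ?_, ?_, hcl2⟩
    · rw [← Phi_symm_pathClass, ← key]
    · show pathClass ((lam.trans h').trans lam.symm) ∈ H
      rw [← Phi_symm_pathClass, hh', ← Phi_pathClass, MulEquiv.symm_apply_apply]
      exact hh0

lemma main_aux (H : Subgroup (FundamentalGroup X x)) :
    ∃ e : qsSet x (H : Set (FundamentalGroup X x)) ≃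
        qsSet y { q | ∃ h : Path x x, pathClass h ∈ H ∧
          q = pathClass ((lam.symm.trans h).trans lam) },
      (∀ (f : Path x x) (hf : pathClass f ∈ qsSet x (H : Set (FundamentalGroup X x))),
        (e ⟨pathClass f, hf⟩ : FundamentalGroup X y)
          = pathClass ((lam.symm.trans f).trans lam)) ∧
      (∀ p q (hp : p ∈ qsSet x (H : Set (FundamentalGroup X x)))
          (hq : q ∈ qsSet x (H : Set (FundamentalGroup X x)))
          (hpq : p * q ∈ qsSet x (H : Set (FundamentalGroup X x))),
        (e ⟨p * q, hpq⟩ : FundamentalGroup X y)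
          = (e ⟨p, hp⟩ : FundamentalGroup X y) * (e ⟨q, hq⟩ : FundamentalGroup X y)) := by
  refine ⟨Equiv.subtypeEquiv (Phi lam).toEquiv (qsSet_mem_transport lam H), ?_, ?_⟩
  · intro f hf
    show Phi lam (pathClass f) = _
    exact Phi_pathClass lam f
  · intro p q hp hq hpq
    show Phi lam (p * q) = Phi lam p * Phi lam q
    exact map_mul _ _ _

end MainAux

lemma bot_transport {x y : X} (lam : Path x y) :
    { q | ∃ h : Path x x, pathClass h ∈ (⊥ : Subgroup (FundamentalGroup X x)) ∧
        q = pathClass ((lam.symm.trans h).trans lam) }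
      = ((⊥ : Subgroup (FundamentalGroup X y)) : Set (FundamentalGroup X y)) := by
  ext q
  simp only [Set.mem_setOf_eq, SetLike.mem_coe, Subgroup.mem_bot]
  constructor
  · rintro ⟨h0, hm0, rfl⟩
    rw [← Phi_pathClass, hm0, map_one]
  · rintro rfl
    exact ⟨Path.refl x, pathClass_refl x, by rw [← Phi_pathClass, pathClass_refl, map_one]⟩


/-- for a subgroup `H` of `π₁(X, x)` and a path `λ` from `x` to `y`,
conjugation by `λ` gives a group isomorphism `π_H^qs(X, x) ≅ π_{[λ]⁻¹H[λ]}^qs(X, y)`;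
in particular `π₁^qs(X, x) ≅ π₁^qs(X, y)` for `x, y` in the same path component. -/
theorem stmt10 {x y : X} (H : Subgroup (FundamentalGroup X x)) (lam : Path x y) :
    (∃ e : qsSet x (H : Set (FundamentalGroup X x)) ≃
        qsSet y { q | ∃ h : Path x x, pathClass h ∈ H ∧
          q = pathClass ((lam.symm.trans h).trans lam) },
      (∀ (f : Path x x) (hf : pathClass f ∈ qsSet x (H : Set (FundamentalGroup X x))),
        (e ⟨pathClass f, hf⟩ : FundamentalGroup X y)
          = pathClass ((lam.symm.trans f).trans lam)) ∧
      (∀ p q (hp : p ∈ qsSet x (H : Set (FundamentalGroup X x)))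
          (hq : q ∈ qsSet x (H : Set (FundamentalGroup X x)))
          (hpq : p * q ∈ qsSet x (H : Set (FundamentalGroup X x))),
        (e ⟨p * q, hpq⟩ : FundamentalGroup X y)
          = (e ⟨p, hp⟩ : FundamentalGroup X y) * (e ⟨q, hq⟩ : FundamentalGroup X y))) ∧
    (∃ e' : qs x ≃ qs y,
      ∀ p q (hp : p ∈ qs x) (hq : q ∈ qs x) (hpq : p * q ∈ qs x),
        (e' ⟨p * q, hpq⟩ : FundamentalGroup X y)
          = (e' ⟨p, hp⟩ : FundamentalGroup X y) * (e' ⟨q, hq⟩ : FundamentalGroup X y)) := by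
  constructor
  · exact main_aux lam H
  · obtain ⟨e, he1, he2⟩ := main_aux lam (⊥ : Subgroup (FundamentalGroup X x))
    have hset : qsSet y { q | ∃ h : Path x x,
        pathClass h ∈ (⊥ : Subgroup (FundamentalGroup X x)) ∧
        q = pathClass ((lam.symm.trans h).trans lam) } = qs y := by
      rw [bot_transport lam]; rfl
    refine ⟨e.trans (Equiv.setCongr hset), ?_⟩
    intro p q hp hq hpq
    exact he2 p q hp hq hpq
end
end
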